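/- (Uniqueness of Fast Finalization) With n ≥ 3f + 2p + 1 replicas, at most f' ≤ f corrupt, each honest replica casting at most one first vote: if some replica P receives f + p + 1 first votes for a block B (at most one vote counted per replica), then no block C ≠ B can be fast finalized, i.e., no block C ≠ B can receive first votes from at least n - p - f' honest replicas. -/
import Mathlib


/-- Uniqueness of Fast Finalization: if replica `P` counts `f + p + 1`
first votes for a block `B` (at most one per replica, and votes seen from
honest replicas are their actual first votes), then no block `C ≠ B`
receives first votes from at least `n - p - f'` honest replicas. -/
theorem uniqueness_of_fast_finalization
    {α Block : Type} [DecidableEq α] [DecidableEq Block]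
    (n f p f' : ℕ) (hn : n ≥ 3 * f + 2 * p + 1) (hf' : f' ≤ f)
    (R : Finset α) (hR : R.card = n)
    (corrupt : Finset α) (hcsub : corrupt ⊆ R) (hc : corrupt.card = f')
    (firstVote : α → Option Block)   -- actual first vote of each (honest) replica
    (viewP : α → Option Block)       -- the (at most one) first vote P counts per replica
    (hagree : ∀ r ∈ R \ corrupt, ∀ b : Block, viewP r = some b → firstVote r = some b)
    (B : Block)
    (hmany : ((R.filter (fun r => viewP r = some B)).card ≥ f + p + 1)) :
    ∀ C : Block, C ≠ B →
      ((R \ corrupt).filter (fun r => firstVote r = some C)).card < n - p - f' := by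
  intro C hCB
  set H := R \ corrupt with hH
  set A := H.filter (fun r => firstVote r = some B) with hA
  set D := H.filter (fun r => firstVote r = some C) with hD
  have hHcard : H.card = n - f' := by
    rw [hH, Finset.card_sdiff_of_subset hcsub, hR, hc]
  have hf'n : f' ≤ n := by omega
  -- viewP B voters are in A ∪ corrupt
  have hsub : R.filter (fun r => viewP r = some B) ⊆ A ∪ corrupt := by
    intro r hr
    simp only [Finset.mem_filter] at hr
    by_cases hrc : r ∈ corrupt
    · exact Finset.mem_union_right _ hrc
    · refine Finset.mem_union_left _ ?_
      have hrH : r ∈ H := by rw [hH]; exact Finset.mem_sdiff.mpr ⟨hr.1, hrc⟩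
      exact Finset.mem_filter.mpr ⟨hrH, hagree r hrH B hr.2⟩
  have hAcard : f + p + 1 ≤ A.card + f' := by
    have := Finset.card_le_card hsub
    have hu := Finset.card_union_le A corrupt
    omega
  -- A and D disjoint, both ⊆ H
  have hdisj : Disjoint A D := by
    rw [Finset.disjoint_left]
    intro r hrA hrD
    simp only [hA, hD, Finset.mem_filter] at hrA hrD
    rw [hrA.2] at hrD
    exact hCB (Option.some.inj hrD.2).symm
  have hADle : A.card + D.card ≤ H.card := by
    rw [← Finset.card_union_of_disjoint hdisj]
    exact Finset.card_le_card (Finset.union_subset (Finset.filter_subset _ _)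
      (Finset.filter_subset _ _))
  omega
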